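/- Assume that every point z ∈ Z = {x ∈ ℂ : c₁(x) = 0} is a regular singular point of P in the growth sense, i.e. for every open sector S with vertex z and every holomorphic M_N(ℂ)-valued solution W of A₂W″ + A₁W′ + A₀W = 0 on S there exists β ∈ ℕ with (x−z)^β·W(x) → 0 as x → z within S. Then every solution Y of the Riccati equation Y′ = A(x) + B(x)Y + Y C(x) Y that is holomorphic (single-valued) on ℂ∖Z extends to a matrix of meromorphic functions on all of ℂ. -/

import Mathlib

open Polynomial

noncomputable section

/-- `A₂(x) = c₁(x)·I_N` where `c₁ = det C`. -/
def RicA2 {N : ℕ} (C : Matrix (Fin N) (Fin N) (Polynomial ℂ)) :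
    Matrix (Fin N) (Fin N) (Polynomial ℂ) :=
  C.det • (1 : Matrix (Fin N) (Fin N) (Polynomial ℂ))

/-- `A₁(x) = -(C(x)B(x)C₀(x) + C′(x)C₀(x))` where `C₀` is the adjugate of `C`. -/
def RicA1 {N : ℕ} (B C : Matrix (Fin N) (Fin N) (Polynomial ℂ)) :
    Matrix (Fin N) (Fin N) (Polynomial ℂ) :=
  -(C * B * C.adjugate + (C.map fun p => derivative p) * C.adjugate)

/-- `A₀(x) = c₁(x)·C(x)·A(x)` where `c₁ = det C`. -/
def RicA0 {N : ℕ} (A C : Matrix (Fin N) (Fin N) (Polynomial ℂ)) :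
    Matrix (Fin N) (Fin N) (Polynomial ℂ) :=
  C.det • (C * A)

/-- ν(A): minimum over the entries of a polynomial matrix of the order of vanishing
at `x = 0` (`⊤` for the zero matrix), as a natural number via `toNat`. -/
def matNu {N : ℕ} (A : Matrix (Fin N) (Fin N) (Polynomial ℂ)) : ℕ :=
  (⨅ i, ⨅ j, (A i j).trailingDegree).toNat

end

noncomputable section

/-- The open sector with vertex `z`, opening angles `(θ₁, θ₂)` and radius `r`. -/
def Sector (z : ℂ) (θ₁ θ₂ r : ℝ) : Set ℂ :=
  {w | ∃ ρ θ : ℝ, 0 < ρ ∧ ρ < r ∧ θ₁ < θ ∧ θ < θ₂ ∧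
    w = z + ρ * Complex.exp (θ * Complex.I)}

/-- Entrywise derivative of a matrix-valued function. -/
def matDeriv {N : ℕ} (W : ℂ → Matrix (Fin N) (Fin N) ℂ) : ℂ → Matrix (Fin N) (Fin N) ℂ :=
  fun x => Matrix.of fun i j => deriv (fun t => W t i j) x

/-- `W` is a holomorphic solution of `A₂W″ + A₁W′ + A₀W = 0` on the set `S`. -/
def IsSolOn {N : ℕ} (A₂ A₁ A₀ : Matrix (Fin N) (Fin N) (Polynomial ℂ))
    (W : ℂ → Matrix (Fin N) (Fin N) ℂ) (S : Set ℂ) : Prop :=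
  (∀ i j, DifferentiableOn ℂ (fun x => W x i j) S) ∧
    ∀ x ∈ S,
      (A₂.map fun p => p.eval x) * matDeriv (matDeriv W) x +
        (A₁.map fun p => p.eval x) * matDeriv W x +
        (A₀.map fun p => p.eval x) * W x = 0

/-- Every point `z ∈ Z = {c₁ = 0}` is a regular singular point of
`P = A₂(d/dx)² + A₁(d/dx) + A₀` in the growth sense: on every sector with vertex `z`,
every holomorphic solution `W` of `A₂W″ + A₁W′ + A₀W = 0` satisfies
`(x-z)^β·W(x) → 0` as `x → z` in the sector, for some `β ∈ ℕ`. -/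
def RegularSingular {N : ℕ} (A₂ A₁ A₀ : Matrix (Fin N) (Fin N) (Polynomial ℂ))
    (c₁ : Polynomial ℂ) : Prop :=
  ∀ z : ℂ, c₁.eval z = 0 → ∀ θ₁ θ₂ r : ℝ, θ₁ < θ₂ → 0 < r →
    ∀ W : ℂ → Matrix (Fin N) (Fin N) ℂ, IsSolOn A₂ A₁ A₀ W (Sector z θ₁ θ₂ r) →
      ∃ β : ℕ, ∀ i j, Filter.Tendsto (fun x => (x - z) ^ β * W x i j)
        (nhdsWithin z (Sector z θ₁ θ₂ r)) (nhds 0)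

end


section RicAuxSection
open Polynomial Matrix Set Filter

namespace RicAux

attribute [local instance] Matrix.linftyOpNormedAddCommGroup Matrix.linftyOpNormedSpace
  Matrix.linftyOpNormedRing Matrix.linftyOpNormedAlgebra

abbrev PMat (N : ℕ) := Matrix (Fin N) (Fin N) (Polynomial ℂ)



variable {N : ℕ}

abbrev Mat (N : ℕ) := Matrix (Fin N) (Fin N) ℂ

noncomputable instance : CompleteSpace (Mat N) := FiniteDimensional.complete ℂ _

/-- entry extraction as a continuous linear map -/
noncomputable def entryCLM (i j : Fin N) : Mat N →L[ℂ] ℂ :=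
  LinearMap.toContinuousLinearMap (Matrix.entryLinearMap ℂ ℂ i j)

@[simp] lemma entryCLM_apply (i j : Fin N) (M : Mat N) : entryCLM i j M = M i j := rfl

lemma HasDerivAt.matrix_entry {M : ℂ → Mat N} {M' : Mat N} {x : ℂ}
    (h : HasDerivAt M M' x) (i j : Fin N) :
    HasDerivAt (fun x => M x i j) (M' i j) x := by
  have := (entryCLM i j).hasFDerivAt.comp_hasDerivAt x h
  exact this

lemma hasDerivAt_matrix {M : ℂ → Mat N} {M' : Mat N} {x : ℂ}
    (h : ∀ i j, HasDerivAt (fun x => M x i j) (M' i j) x) :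
    HasDerivAt M M' x := by
  have h1 : HasDerivAt (fun x => ∑ i : Fin N, ∑ j : Fin N, single i j (M x i j))
      (∑ i : Fin N, ∑ j : Fin N, single i j (M' i j)) x := by
    apply HasDerivAt.fun_sum
    intro i _
    apply HasDerivAt.fun_sum
    intro j _
    have hrw : (fun x => single i j (M x i j))
        = fun x => (M x i j) • single i j (1:ℂ) := by
      funext x; rw [smul_single, smul_eq_mul, mul_one]
    have hrw2 : single i j (M' i j) = (M' i j) • single i j (1:ℂ) := by
      rw [smul_single, smul_eq_mul, mul_one]
    rw [hrw, hrw2]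
    exact (h i j).smul_const _
  have e1 : (fun x => ∑ i : Fin N, ∑ j : Fin N, single i j (M x i j)) = M := by
    funext x; exact (matrix_eq_sum_single (M x)).symm
  have e2 : (∑ i : Fin N, ∑ j : Fin N, single i j (M' i j)) = M' :=
    (matrix_eq_sum_single M').symm
  rwa [e1, e2] at h1



/-- antiderivative of a polynomial over ℂ -/
noncomputable def pAnti (p : Polynomial ℂ) : Polynomial ℂ :=
  p.sum fun k a => C (a / (k + 1)) * X ^ (k + 1)

lemma pAnti_add (p q : Polynomial ℂ) : pAnti (p + q) = pAnti p + pAnti q := by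
  unfold pAnti
  apply Polynomial.sum_add_index
  · intro i; simp
  · intro i a b; rw [add_div, map_add, add_mul]

lemma pAnti_zero : pAnti 0 = 0 := by simp [pAnti]

lemma pAnti_neg (p : Polynomial ℂ) : pAnti (-p) = -pAnti p := by
  have h := pAnti_add p (-p)
  rw [add_neg_cancel, pAnti_zero] at h
  linear_combination -h

lemma derivative_pAnti (p : Polynomial ℂ) : derivative (pAnti p) = p := by
  unfold pAnti
  rw [Polynomial.sum, map_sum]
  conv_rhs => rw [← Polynomial.sum_C_mul_X_pow_eq p]
  rw [Polynomial.sum]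
  apply Finset.sum_congr rfl
  intro k hk
  rw [Polynomial.derivative_C_mul_X_pow, Nat.add_sub_cancel]
  congr 1
  rw [Nat.cast_add, Nat.cast_one, div_mul_cancel₀]
  exact_mod_cast Nat.cast_add_one_ne_zero (R := ℂ) k

/-- antiderivative vanishing at x₁ -/
noncomputable def pInt (x₁ : ℂ) (p : Polynomial ℂ) : Polynomial ℂ :=
  pAnti p - C ((pAnti p).eval x₁)

lemma derivative_pInt (x₁ : ℂ) (p : Polynomial ℂ) : derivative (pInt x₁ p) = p := by
  rw [pInt, map_sub, derivative_C, sub_zero, derivative_pAnti]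

lemma pInt_eval_self (x₁ : ℂ) (p : Polynomial ℂ) : (pInt x₁ p).eval x₁ = 0 := by
  simp [pInt]

lemma pInt_add (x₁ : ℂ) (p q : Polynomial ℂ) :
    pInt x₁ (p + q) = pInt x₁ p + pInt x₁ q := by
  simp only [pInt, pAnti_add, eval_add, map_add]; ring

lemma pInt_neg (x₁ : ℂ) (p : Polynomial ℂ) : pInt x₁ (-p) = -pInt x₁ p := by
  simp only [pInt, pAnti_neg, eval_neg, map_neg]; ring

lemma pInt_sub (x₁ : ℂ) (p q : Polynomial ℂ) :
    pInt x₁ (p - q) = pInt x₁ p - pInt x₁ q := by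
  rw [sub_eq_add_neg, pInt_add, pInt_neg, sub_eq_add_neg]

/-- evaluation of a polynomial matrix -/
noncomputable def evP (x : ℂ) (P : PMat N) : Mat N := (Polynomial.evalRingHom x).mapMatrix P

lemma evP_apply (x : ℂ) (P : PMat N) (i j : Fin N) : evP x P i j = (P i j).eval x := rfl

lemma evP_eq_map (x : ℂ) (P : PMat N) : evP x P = P.map fun p => p.eval x := rfl

lemma evP_mul (x : ℂ) (P Q : PMat N) : evP x (P * Q) = evP x P * evP x Q := map_mul _ _ _
lemma evP_add (x : ℂ) (P Q : PMat N) : evP x (P + Q) = evP x P + evP x Q := map_add _ _ _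
lemma evP_sub (x : ℂ) (P Q : PMat N) : evP x (P - Q) = evP x P - evP x Q := map_sub _ _ _
lemma evP_neg (x : ℂ) (P : PMat N) : evP x (-P) = -evP x P := map_neg _ _
lemma evP_one (x : ℂ) : evP x (1 : PMat N) = 1 := map_one _

lemma hasDerivAt_evP (P : PMat N) (x : ℂ) :
    HasDerivAt (fun z => evP z P) (evP x (P.map derivative)) x := by
  apply hasDerivAt_matrix
  intro i j
  have h := (P i j).hasDerivAt x
  simpa [evP_apply, Matrix.map_apply] using h

lemma differentiable_evP (P : PMat N) : Differentiable ℂ (fun z => evP z P) :=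
  fun x => (hasDerivAt_evP P x).differentiableAt

/-- entrywise integral from x₁ -/
noncomputable def mInt (x₁ : ℂ) (P : PMat N) : PMat N := P.map (pInt x₁)

lemma mInt_map_derivative (x₁ : ℂ) (P : PMat N) :
    (mInt x₁ P).map derivative = P := by
  ext i j; simp [mInt, Matrix.map_apply, derivative_pInt]

lemma evP_mInt_self (x₁ : ℂ) (P : PMat N) : evP x₁ (mInt x₁ P) = 0 := by
  ext i j; simp [evP_apply, mInt, Matrix.map_apply, pInt_eval_self]

lemma mInt_sub (x₁ : ℂ) (P Q : PMat N) (h : ∀ p q, pInt x₁ (p - q) = pInt x₁ p - pInt x₁ q) :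
    mInt x₁ (P - Q) = mInt x₁ P - mInt x₁ Q := by
  ext i j; simp [mInt, Matrix.map_apply, Matrix.sub_apply, h]

lemma hasDerivAt_evP_mInt (P : PMat N) (x₁ x : ℂ) :
    HasDerivAt (fun z => evP z (mInt x₁ P)) (evP x P) x := by
  have := hasDerivAt_evP (mInt x₁ P) x
  rwa [mInt_map_derivative] at this

lemma hasDerivAt_seg (x₁ w : ℂ) (t : ℝ) :
    HasDerivAt (fun t : ℝ => x₁ + (t:ℂ) * w) w t := by
  have h0 : HasDerivAt (fun t : ℝ => (t:ℂ)) 1 t := by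
    exact Complex.ofRealCLM.hasDerivAt (x := t)
  simpa using (h0.mul_const w).const_add x₁

/-- composition of a complex-differentiable function with a real segment -/
lemma hasDerivAt_comp_seg {f : ℂ → Mat N} {D : Mat N} {x₁ w : ℂ} {t : ℝ}
    (hf : HasDerivAt f D (x₁ + (t:ℂ) * w)) :
    HasDerivAt (fun t : ℝ => f (x₁ + (t:ℂ) * w)) (w • D) t := by
  have h := (hf.hasFDerivAt.restrictScalars ℝ).comp_hasDerivAt t (hasDerivAt_seg x₁ w t)
  exact h

lemma evP_mInt_eq_integral (P : PMat N) (x₁ x : ℂ) :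
    evP x (mInt x₁ P) =
      ∫ t in (0:ℝ)..1, (x - x₁) • evP (x₁ + (t:ℂ) * (x - x₁)) P := by
  set w := x - x₁ with hw
  have hg : ∀ t : ℝ, HasDerivAt (fun t : ℝ => evP (x₁ + (t:ℂ) * w) (mInt x₁ P))
      (w • evP (x₁ + (t:ℂ) * w) P) t := fun t =>
    hasDerivAt_comp_seg (hasDerivAt_evP_mInt P x₁ _)
  have hcont : Continuous fun t : ℝ => w • evP (x₁ + (t:ℂ) * w) P := by
    refine Continuous.const_smul (g := fun t : ℝ => evP (x₁ + (t:ℂ) * w) P) ?_ w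
    exact (differentiable_evP P).continuous.comp
      (by continuity : Continuous fun t : ℝ => x₁ + (t:ℂ) * w)
  have := intervalIntegral.integral_eq_sub_of_hasDerivAt
    (f := fun t : ℝ => evP (x₁ + (t:ℂ) * w) (mInt x₁ P))
    (fun t _ => hg t) (hcont.intervalIntegrable 0 1)
  rw [this]
  have h1 : (fun t : ℝ => evP (x₁ + (t:ℂ) * w) (mInt x₁ P)) 1 = evP x (mInt x₁ P) := by
    have : x₁ + ((1:ℝ):ℂ) * w = x := by push_cast; rw [hw]; ring
    simp only [this]
  have h0 : (fun t : ℝ => evP (x₁ + (t:ℂ) * w) (mInt x₁ P)) 0 = 0 := by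
    have : x₁ + ((0:ℝ):ℂ) * w = x₁ := by push_cast; ring
    simp only [this, evP_mInt_self]
  simp only at h1 h0
  rw [h1, h0, sub_zero]

lemma norm_evP_mInt_le (P : PMat N) (x₁ x : ℂ) {c : ℝ} {n : ℕ} (hc : 0 ≤ c)
    (hb : ∀ t : ℝ, t ∈ Set.Icc (0:ℝ) 1 →
      ‖evP (x₁ + (t:ℂ) * (x - x₁)) P‖ ≤ c * (t * ‖x - x₁‖) ^ n / n.factorial) :
    ‖evP x (mInt x₁ P)‖ ≤ c * ‖x - x₁‖ ^ (n+1) / (n+1).factorial := by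
  rw [evP_mInt_eq_integral]
  have hInt : (∫ t in (0:ℝ)..1, ‖x - x₁‖ * (c * (t * ‖x - x₁‖) ^ n / n.factorial))
      = c * ‖x - x₁‖ ^ (n+1) / (n+1).factorial := by
    have hrw : ∀ t : ℝ, ‖x - x₁‖ * (c * (t * ‖x - x₁‖) ^ n / n.factorial)
        = (‖x - x₁‖ * c * ‖x - x₁‖ ^ n / n.factorial) * t ^ n := by
      intro t; rw [mul_pow]; ring
    simp_rw [hrw]
    rw [intervalIntegral.integral_const_mul, integral_pow, Nat.factorial_succ]
    push_cast
    field_simp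
    ring
  have key := intervalIntegral.norm_integral_le_of_norm_le
    (f := fun t : ℝ => (x - x₁) • evP (x₁ + (t:ℂ) * (x - x₁)) P)
    (g := fun t : ℝ => ‖x - x₁‖ * (c * (t * ‖x - x₁‖) ^ n / n.factorial))
    (a := 0) (b := 1) (μ := MeasureTheory.volume) (by norm_num) ?_ ?_
  · rw [hInt] at key
    exact key
  · filter_upwards with t ht
    rw [norm_smul]
    exact mul_le_mul_of_nonneg_left (hb t ⟨le_of_lt ht.1, ht.2⟩) (norm_nonneg _)
  · apply Continuous.intervalIntegrable
    continuity


variable {N : ℕ}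

/-- Picard iterates: pairs of polynomial matrices. -/
noncomputable def picard (A B C : PMat N) (x₁ : ℂ) (Y₀p : PMat N) : ℕ → PMat N × PMat N
  | 0 => (1, Y₀p)
  | n + 1 =>
      (1 + mInt x₁ (-(C * (picard A B C x₁ Y₀p n).2)),
       Y₀p + mInt x₁ (A * (picard A B C x₁ Y₀p n).1 + B * (picard A B C x₁ Y₀p n).2))

variable (A B C : PMat N) (x₁ : ℂ) (Y₀p : PMat N)

noncomputable def dW (n : ℕ) : PMat N :=
  (picard A B C x₁ Y₀p (n+1)).1 - (picard A B C x₁ Y₀p n).1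

noncomputable def dU (n : ℕ) : PMat N :=
  (picard A B C x₁ Y₀p (n+1)).2 - (picard A B C x₁ Y₀p n).2

lemma dW_zero : dW A B C x₁ Y₀p 0 = mInt x₁ (-(C * Y₀p)) := by
  show (1 + mInt x₁ (-(C * Y₀p))) - 1 = _
  abel

lemma dU_zero : dU A B C x₁ Y₀p 0 = mInt x₁ (A * 1 + B * Y₀p) := by
  show (Y₀p + mInt x₁ (A * 1 + B * Y₀p)) - Y₀p = _
  abel

lemma dW_succ (n : ℕ) :
    dW A B C x₁ Y₀p (n+1) = mInt x₁ (-(C * dU A B C x₁ Y₀p n)) := by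
  have harg : -(C * dU A B C x₁ Y₀p n)
      = -(C * (picard A B C x₁ Y₀p (n+1)).2) - -(C * (picard A B C x₁ Y₀p n).2) := by
    rw [dU, mul_sub]; abel
  rw [harg, mInt_sub x₁ _ _ (pInt_sub x₁)]
  show (1 + mInt x₁ (-(C * (picard A B C x₁ Y₀p (n+1)).2)))
      - (1 + mInt x₁ (-(C * (picard A B C x₁ Y₀p n).2))) = _
  abel

lemma dU_succ (n : ℕ) :
    dU A B C x₁ Y₀p (n+1)
      = mInt x₁ (A * dW A B C x₁ Y₀p n + B * dU A B C x₁ Y₀p n) := by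
  have harg : A * dW A B C x₁ Y₀p n + B * dU A B C x₁ Y₀p n
      = (A * (picard A B C x₁ Y₀p (n+1)).1 + B * (picard A B C x₁ Y₀p (n+1)).2)
        - (A * (picard A B C x₁ Y₀p n).1 + B * (picard A B C x₁ Y₀p n).2) := by
    rw [dW, dU, mul_sub, mul_sub]; abel
  rw [harg, mInt_sub x₁ _ _ (pInt_sub x₁)]
  show (Y₀p + mInt x₁ (A * (picard A B C x₁ Y₀p (n+1)).1 + B * (picard A B C x₁ Y₀p (n+1)).2))
      - (Y₀p + mInt x₁ (A * (picard A B C x₁ Y₀p n).1 + B * (picard A B C x₁ Y₀p n).2)) = _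
  abel

lemma picard_telescope (n : ℕ) :
    (picard A B C x₁ Y₀p n).1 = 1 + ∑ k ∈ Finset.range n, dW A B C x₁ Y₀p k ∧
    (picard A B C x₁ Y₀p n).2 = Y₀p + ∑ k ∈ Finset.range n, dU A B C x₁ Y₀p k := by
  induction n with
  | zero => constructor <;> simp [picard]
  | succ n ih =>
      constructor
      · rw [Finset.sum_range_succ, ← add_assoc, ← ih.1, dW]; abel
      · rw [Finset.sum_range_succ, ← add_assoc, ← ih.2, dU]; abel


variable {N : ℕ}

lemma mapDerivative_add (P Q : PMat N) :
    (P + Q).map derivative = P.map derivative + Q.map derivative := by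
  ext i j; simp [Matrix.map_apply, Matrix.add_apply]

lemma mapDerivative_one : ((1 : PMat N)).map derivative = 0 := by
  ext i j
  simp only [Matrix.map_apply, Matrix.one_apply, Matrix.zero_apply, apply_ite derivative,
    derivative_one, derivative_zero, ite_self]

lemma hasDerivAt_evP_one_add_mInt (Q : PMat N) (x₁ x : ℂ) :
    HasDerivAt (fun z => evP z (1 + mInt x₁ Q)) (evP x Q) x := by
  have h := hasDerivAt_evP (1 + mInt x₁ Q) x
  rwa [mapDerivative_add, mapDerivative_one, mInt_map_derivative, zero_add] at h

lemma hasDerivAt_evP_add_mInt (P Q : PMat N) (x₁ x : ℂ)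
    (hP : P.map derivative = 0) :
    HasDerivAt (fun z => evP z (P + mInt x₁ Q)) (evP x Q) x := by
  have h := hasDerivAt_evP (P + mInt x₁ Q) x
  rwa [mapDerivative_add, hP, mInt_map_derivative, zero_add] at h

lemma mapDerivative_constMat (Y₀ : Mat N) :
    ((Y₀.map Polynomial.C : PMat N)).map derivative = 0 := by
  ext i j; simp [Matrix.map_apply]

/-- The key quantitative bound for the Picard iterates. -/
lemma picard_bound (A B C : PMat N) (x₁ : ℂ) (Y₀p : PMat N) {R : ℝ} (hR : 0 < R) :
    ∃ κ L : ℝ, 0 ≤ κ ∧ 0 ≤ L ∧ ∀ n, ∀ x ∈ Metric.closedBall x₁ R,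
      ‖evP x (dW A B C x₁ Y₀p n)‖ ≤ L * (κ * ‖x - x₁‖) ^ n / n.factorial ∧
      ‖evP x (dU A B C x₁ Y₀p n)‖ ≤ L * (κ * ‖x - x₁‖) ^ n / n.factorial := by
  have hcb : IsCompact (Metric.closedBall x₁ R) := isCompact_closedBall _ _
  have hmem : x₁ ∈ Metric.closedBall x₁ R := Metric.mem_closedBall_self hR.le
  obtain ⟨cA, hcA⟩ := hcb.exists_bound_of_continuousOn (differentiable_evP A).continuous.continuousOn
  obtain ⟨cB, hcB⟩ := hcb.exists_bound_of_continuousOn (differentiable_evP B).continuous.continuousOn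
  obtain ⟨cC, hcC⟩ := hcb.exists_bound_of_continuousOn (differentiable_evP C).continuous.continuousOn
  obtain ⟨l1, hl1⟩ := hcb.exists_bound_of_continuousOn
    (differentiable_evP (dW A B C x₁ Y₀p 0)).continuous.continuousOn
  obtain ⟨l2, hl2⟩ := hcb.exists_bound_of_continuousOn
    (differentiable_evP (dU A B C x₁ Y₀p 0)).continuous.continuousOn
  have h0A : (0:ℝ) ≤ cA := le_trans (norm_nonneg _) (hcA x₁ hmem)
  have h0B : (0:ℝ) ≤ cB := le_trans (norm_nonneg _) (hcB x₁ hmem)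
  have h0C : (0:ℝ) ≤ cC := le_trans (norm_nonneg _) (hcC x₁ hmem)
  refine ⟨max cC (cA + cB), max l1 l2, le_trans h0C (le_max_left _ _),
    le_trans (le_trans (norm_nonneg _) (hl1 x₁ hmem)) (le_max_left _ _), ?_⟩
  set κ := max cC (cA + cB) with hκ
  set L := max l1 l2 with hL
  have hκ0 : (0:ℝ) ≤ κ := le_trans h0C (le_max_left _ _)
  have hL0 : (0:ℝ) ≤ L := le_trans (le_trans (norm_nonneg _) (hl1 x₁ hmem)) (le_max_left _ _)
  intro n
  induction n with
  | zero =>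
      intro x hx
      simp only [pow_zero, Nat.factorial_zero, Nat.cast_one, mul_one, div_one]
      exact ⟨(hl1 x hx).trans (le_max_left _ _), (hl2 x hx).trans (le_max_right _ _)⟩
  | succ n ih =>
      intro x hx
      have hxR : ‖x - x₁‖ ≤ R := by
        rw [← dist_eq_norm]; exact Metric.mem_closedBall.mp hx
      have hseg : ∀ t : ℝ, t ∈ Set.Icc (0:ℝ) 1 →
          (x₁ + (t:ℂ) * (x - x₁)) ∈ Metric.closedBall x₁ R ∧
          ‖(x₁ + (t:ℂ) * (x - x₁)) - x₁‖ = t * ‖x - x₁‖ := by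
        intro t ht
        have hn : ‖(x₁ + (t:ℂ) * (x - x₁)) - x₁‖ = t * ‖x - x₁‖ := by
          rw [add_sub_cancel_left, norm_mul, Complex.norm_real, Real.norm_eq_abs,
            abs_of_nonneg ht.1]
        constructor
        · rw [Metric.mem_closedBall, dist_eq_norm, hn]
          calc t * ‖x - x₁‖ ≤ 1 * ‖x - x₁‖ := by
                exact mul_le_mul_of_nonneg_right ht.2 (norm_nonneg _)
            _ ≤ R := by rw [one_mul]; exact hxR
        · exact hn
      constructor
      · rw [dW_succ]
        have hb : ∀ t : ℝ, t ∈ Set.Icc (0:ℝ) 1 →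
            ‖evP (x₁ + (t:ℂ) * (x - x₁)) (-(C * dU A B C x₁ Y₀p n))‖
              ≤ (L * κ ^ (n+1)) * (t * ‖x - x₁‖) ^ n / n.factorial := by
          intro t ht
          obtain ⟨hmem', hnorm'⟩ := hseg t ht
          rw [evP_neg, norm_neg, evP_mul]
          calc ‖evP _ C * evP _ (dU A B C x₁ Y₀p n)‖
              ≤ ‖evP (x₁ + (t:ℂ) * (x - x₁)) C‖ * ‖evP _ (dU A B C x₁ Y₀p n)‖ :=
                norm_mul_le _ _
            _ ≤ κ * (L * (κ * ‖(x₁ + (t:ℂ) * (x - x₁)) - x₁‖) ^ n / n.factorial) := by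
                apply mul_le_mul ((hcC _ hmem').trans (le_max_left _ _)) ((ih _ hmem').2)
                  (norm_nonneg _) hκ0
            _ = (L * κ ^ (n+1)) * (t * ‖x - x₁‖) ^ n / n.factorial := by
                rw [hnorm', mul_pow]; ring
        have := norm_evP_mInt_le (-(C * dU A B C x₁ Y₀p n)) x₁ x (by positivity) hb
        calc ‖evP x (mInt x₁ (-(C * dU A B C x₁ Y₀p n)))‖
            ≤ (L * κ ^ (n+1)) * ‖x - x₁‖ ^ (n+1) / (n+1).factorial := this
          _ = L * (κ * ‖x - x₁‖) ^ (n+1) / (n+1).factorial := by rw [mul_pow]; ring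
      · rw [dU_succ]
        have hb : ∀ t : ℝ, t ∈ Set.Icc (0:ℝ) 1 →
            ‖evP (x₁ + (t:ℂ) * (x - x₁)) (A * dW A B C x₁ Y₀p n + B * dU A B C x₁ Y₀p n)‖
              ≤ (L * κ ^ (n+1)) * (t * ‖x - x₁‖) ^ n / n.factorial := by
          intro t ht
          obtain ⟨hmem', hnorm'⟩ := hseg t ht
          rw [evP_add, evP_mul, evP_mul]
          set bnd := L * (κ * ‖(x₁ + (t:ℂ) * (x - x₁)) - x₁‖) ^ n / n.factorial with hbnd
          have hbnd0 : 0 ≤ bnd := by positivity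
          calc ‖evP _ A * evP _ (dW A B C x₁ Y₀p n) + evP _ B * evP _ (dU A B C x₁ Y₀p n)‖
              ≤ ‖evP _ A * evP _ (dW A B C x₁ Y₀p n)‖ +
                  ‖evP _ B * evP _ (dU A B C x₁ Y₀p n)‖ := norm_add_le _ _
            _ ≤ ‖evP (x₁ + (t:ℂ) * (x - x₁)) A‖ * ‖evP _ (dW A B C x₁ Y₀p n)‖ +
                  ‖evP (x₁ + (t:ℂ) * (x - x₁)) B‖ * ‖evP _ (dU A B C x₁ Y₀p n)‖ :=
                add_le_add (norm_mul_le _ _) (norm_mul_le _ _)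
            _ ≤ cA * bnd + cB * bnd := by
                apply add_le_add
                · exact mul_le_mul (hcA _ hmem') ((ih _ hmem').1) (norm_nonneg _) h0A
                · exact mul_le_mul (hcB _ hmem') ((ih _ hmem').2) (norm_nonneg _) h0B
            _ = (cA + cB) * bnd := by ring
            _ ≤ κ * bnd := mul_le_mul_of_nonneg_right (le_max_right _ _) hbnd0
            _ = (L * κ ^ (n+1)) * (t * ‖x - x₁‖) ^ n / n.factorial := by
                rw [hbnd, hnorm', mul_pow]; ring
        have := norm_evP_mInt_le _ x₁ x (by positivity) hb
        calc ‖evP x (mInt x₁ (A * dW A B C x₁ Y₀p n + B * dU A B C x₁ Y₀p n))‖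
            ≤ (L * κ ^ (n+1)) * ‖x - x₁‖ ^ (n+1) / (n+1).factorial := this
          _ = L * (κ * ‖x - x₁‖) ^ (n+1) / (n+1).factorial := by rw [mul_pow]; ring


variable {N : ℕ}

lemma evP_sum {ι : Type*} (x : ℂ) (s : Finset ι) (f : ι → PMat N) :
    evP x (∑ i ∈ s, f i) = ∑ i ∈ s, evP x (f i) := map_sum _ _ _

theorem exists_entire_pair (A B C : PMat N) (x₁ : ℂ) (Y₀ : Mat N) :
    ∃ W U : ℂ → Mat N,
      (∀ x, HasDerivAt W (-(evP x C * U x)) x) ∧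
      (∀ x, HasDerivAt U (evP x A * W x + evP x B * U x) x) ∧
      W x₁ = 1 ∧ U x₁ = Y₀ := by
  classical
  set Y₀p : PMat N := Y₀.map Polynomial.C with hY₀p
  set WL : ℂ → Mat N := fun x => 1 + ∑' n, evP x (dW A B C x₁ Y₀p n) with hWL
  set UL : ℂ → Mat N := fun x => Y₀ + ∑' n, evP x (dU A B C x₁ Y₀p n) with hUL
  have hY : ∀ x, evP x Y₀p = Y₀ := by
    intro x; ext i j; simp [evP_apply, hY₀p, Matrix.map_apply]
  -- telescoping at the evaluated level
  have htelW : ∀ n x, evP x (picard A B C x₁ Y₀p n).1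
      = 1 + ∑ k ∈ Finset.range n, evP x (dW A B C x₁ Y₀p k) := by
    intro n x
    rw [(picard_telescope A B C x₁ Y₀p n).1, evP_add, evP_one, evP_sum]
  have htelU : ∀ n x, evP x (picard A B C x₁ Y₀p n).2
      = Y₀ + ∑ k ∈ Finset.range n, evP x (dU A B C x₁ Y₀p k) := by
    intro n x
    rw [(picard_telescope A B C x₁ Y₀p n).2, evP_add, hY, evP_sum]
  -- uniform convergence on each closed ball
  have hUC : ∀ R : ℝ, 0 < R →
      TendstoUniformlyOn (fun n x => evP x (picard A B C x₁ Y₀p n).1) WL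
        atTop (Metric.closedBall x₁ R) ∧
      TendstoUniformlyOn (fun n x => evP x (picard A B C x₁ Y₀p n).2) UL
        atTop (Metric.closedBall x₁ R) := by
    intro R hR
    obtain ⟨κ, L, hκ0, hL0, hb⟩ := picard_bound A B C x₁ Y₀p hR
    have hu : Summable (fun n : ℕ => L * (κ * R) ^ n / n.factorial) := by
      have := (Real.summable_pow_div_factorial (κ * R)).mul_left L
      simpa [mul_div_assoc] using this
    have hball : ∀ n (x : ℂ), x ∈ Metric.closedBall x₁ R →
        L * (κ * ‖x - x₁‖) ^ n / n.factorial ≤ L * (κ * R) ^ n / n.factorial := by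
      intro n x hx
      have hxR : ‖x - x₁‖ ≤ R := by rw [← dist_eq_norm]; exact Metric.mem_closedBall.mp hx
      gcongr
    have hWt := tendstoUniformlyOn_tsum_nat hu
      (f := fun n x => evP x (dW A B C x₁ Y₀p n))
      (fun n x hx => le_trans (hb n x hx).1 (hball n x hx))
    have hUt := tendstoUniformlyOn_tsum_nat hu
      (f := fun n x => evP x (dU A B C x₁ Y₀p n))
      (fun n x hx => le_trans (hb n x hx).2 (hball n x hx))
    constructor
    · rw [Metric.tendstoUniformlyOn_iff] at hWt; refine Metric.tendstoUniformlyOn_iff.mpr ?_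
      intro ε hε
      filter_upwards [hWt ε hε] with n hn x hx
      have := hn x hx
      rw [htelW n x, hWL]
      simp only [dist_add_left] at this ⊢
      exact this
    · rw [Metric.tendstoUniformlyOn_iff] at hUt; refine Metric.tendstoUniformlyOn_iff.mpr ?_
      intro ε hε
      filter_upwards [hUt ε hε] with n hn x hx
      have := hn x hx
      rw [htelU n x, hUL]
      simp only [dist_add_left] at this ⊢
      exact this
  -- derivative identification on each open ball
  have hkey : ∀ x : ℂ,
      HasDerivAt WL (-(evP x C * UL x)) x ∧
      HasDerivAt UL (evP x A * WL x + evP x B * UL x) x := by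
    intro x
    set R : ℝ := ‖x - x₁‖ + 1 with hRdef
    have hR : 0 < R := by positivity
    have hx : x ∈ Metric.ball x₁ R := by
      rw [Metric.mem_ball, dist_eq_norm, hRdef]; linarith
    obtain ⟨hWt, hUt⟩ := hUC R hR
    have hWlu := (hWt.mono Metric.ball_subset_closedBall).tendstoLocallyUniformlyOn
    have hUlu := (hUt.mono Metric.ball_subset_closedBall).tendstoLocallyUniformlyOn
    have hdiffW : ∀ᶠ n : ℕ in atTop,
        DifferentiableOn ℂ (fun x => evP x (picard A B C x₁ Y₀p n).1) (Metric.ball x₁ R) :=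
      Eventually.of_forall fun n => (differentiable_evP _).differentiableOn
    have hdiffU : ∀ᶠ n : ℕ in atTop,
        DifferentiableOn ℂ (fun x => evP x (picard A B C x₁ Y₀p n).2) (Metric.ball x₁ R) :=
      Eventually.of_forall fun n => (differentiable_evP _).differentiableOn
    have hWLdiff := hWlu.differentiableOn hdiffW Metric.isOpen_ball
    have hULdiff := hUlu.differentiableOn hdiffU Metric.isOpen_ball
    have hWderiv := hWlu.deriv hdiffW Metric.isOpen_ball
    have hUderiv := hUlu.deriv hdiffU Metric.isOpen_ball
    -- pointwise limits of iterates
    have hWx : Tendsto (fun n => evP x (picard A B C x₁ Y₀p n).1) atTop (nhds (WL x)) :=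
      hWt.tendsto_at (Metric.ball_subset_closedBall hx)
    have hUx : Tendsto (fun n => evP x (picard A B C x₁ Y₀p n).2) atTop (nhds (UL x)) :=
      hUt.tendsto_at (Metric.ball_subset_closedBall hx)
    -- derivatives of iterates
    have hWd : ∀ n, deriv (fun z => evP z (picard A B C x₁ Y₀p (n+1)).1) x
        = -(evP x C * evP x (picard A B C x₁ Y₀p n).2) := by
      intro n
      have h : HasDerivAt (fun z => evP z (picard A B C x₁ Y₀p (n+1)).1)
          (evP x (-(C * (picard A B C x₁ Y₀p n).2))) x :=
        hasDerivAt_evP_one_add_mInt _ x₁ x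
      refine h.deriv.trans ?_; rw [evP_neg, evP_mul]
    have hUd : ∀ n, deriv (fun z => evP z (picard A B C x₁ Y₀p (n+1)).2) x
        = evP x A * evP x (picard A B C x₁ Y₀p n).1
          + evP x B * evP x (picard A B C x₁ Y₀p n).2 := by
      intro n
      have h : HasDerivAt (fun z => evP z (picard A B C x₁ Y₀p (n+1)).2)
          (evP x (A * (picard A B C x₁ Y₀p n).1 + B * (picard A B C x₁ Y₀p n).2)) x :=
        hasDerivAt_evP_add_mInt Y₀p _ x₁ x (mapDerivative_constMat Y₀)
      refine h.deriv.trans ?_; rw [evP_add, evP_mul, evP_mul]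
    -- tendsto of derivatives at x
    have htdW : Tendsto (fun n => deriv (fun z => evP z (picard A B C x₁ Y₀p n).1) x)
        atTop (nhds (deriv WL x)) := hWderiv.tendsto_at hx
    have htdU : Tendsto (fun n => deriv (fun z => evP z (picard A B C x₁ Y₀p n).2) x)
        atTop (nhds (deriv UL x)) := hUderiv.tendsto_at hx
    have htdW' : Tendsto (fun n => deriv (fun z => evP z (picard A B C x₁ Y₀p (n+1)).1) x)
        atTop (nhds (deriv WL x)) := htdW.comp (tendsto_add_atTop_nat 1)
    have htdU' : Tendsto (fun n => deriv (fun z => evP z (picard A B C x₁ Y₀p (n+1)).2) x)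
        atTop (nhds (deriv UL x)) := htdU.comp (tendsto_add_atTop_nat 1)
    have hlimW : Tendsto (fun n => deriv (fun z => evP z (picard A B C x₁ Y₀p (n+1)).1) x)
        atTop (nhds (-(evP x C * UL x))) := by
      simp_rw [hWd]
      exact (hUx.const_mul _).neg
    have hlimU : Tendsto (fun n => deriv (fun z => evP z (picard A B C x₁ Y₀p (n+1)).2) x)
        atTop (nhds (evP x A * WL x + evP x B * UL x)) := by
      simp_rw [hUd]
      exact (hWx.const_mul _).add (hUx.const_mul _)
    have heqW : deriv WL x = -(evP x C * UL x) := tendsto_nhds_unique htdW' hlimW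
    have heqU : deriv UL x = evP x A * WL x + evP x B * UL x := tendsto_nhds_unique htdU' hlimU
    constructor
    · have := (hWLdiff.differentiableAt (Metric.isOpen_ball.mem_nhds hx)).hasDerivAt
      exact this.congr_deriv heqW
    · have := (hULdiff.differentiableAt (Metric.isOpen_ball.mem_nhds hx)).hasDerivAt
      exact this.congr_deriv heqU
  -- values at x₁
  have hdWx₁ : ∀ n, evP x₁ (dW A B C x₁ Y₀p n) = 0 := by
    intro n
    cases n with
    | zero => rw [dW_zero, evP_mInt_self]
    | succ n => rw [dW_succ, evP_mInt_self]
  have hdUx₁ : ∀ n, evP x₁ (dU A B C x₁ Y₀p n) = 0 := by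
    intro n
    cases n with
    | zero => rw [dU_zero, evP_mInt_self]
    | succ n => rw [dU_succ, evP_mInt_self]
  refine ⟨WL, UL, fun x => (hkey x).1, fun x => (hkey x).2, ?_, ?_⟩
  · rw [hWL]; simp only [hdWx₁, tsum_zero, add_zero]
  · rw [hUL]; simp only [hdUx₁, tsum_zero, add_zero]


variable {N : ℕ}

lemma det_differentiableAt {M : ℂ → Mat N} {x : ℂ}
    (h : ∀ i j, DifferentiableAt ℂ (fun x => M x i j) x) :
    DifferentiableAt ℂ (fun x => (M x).det) x := by
  simp_rw [Matrix.det_apply']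
  apply DifferentiableAt.fun_sum
  intro σ _
  exact (DifferentiableAt.fun_finset_prod (fun i _ => h (σ i) i)).const_mul _

lemma adjugate_differentiableAt {M : ℂ → Mat N} {x : ℂ}
    (h : ∀ i j, DifferentiableAt ℂ (fun x => M x i j) x) (i j : Fin N) :
    DifferentiableAt ℂ (fun x => (M x).adjugate i j) x := by
  simp_rw [Matrix.adjugate_apply]
  apply det_differentiableAt
  intro i' j'
  simp_rw [Matrix.updateRow_apply]
  by_cases hij : i' = j
  · simp only [hij, if_true]; exact differentiableAt_const _
  · simp only [hij, if_false]; exact h i' j'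

lemma entry_mul_differentiableAt {M M' : ℂ → Mat N} {x : ℂ}
    (h : ∀ i j, DifferentiableAt ℂ (fun x => M x i j) x)
    (h' : ∀ i j, DifferentiableAt ℂ (fun x => M' x i j) x) (i j : Fin N) :
    DifferentiableAt ℂ (fun x => (M x * M' x) i j) x := by
  simp_rw [Matrix.mul_apply]
  exact DifferentiableAt.fun_sum fun k _ => (h i k).mul (h' k j)

/-- `Ŷ = U W⁻¹` satisfies the Riccati equation where `det W ≠ 0`. -/
lemma Yhat_hasDerivAt (A B C : PMat N) {W U : ℂ → Mat N}
    (hW : ∀ x, HasDerivAt W (-(evP x C * U x)) x)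
    (hU : ∀ x, HasDerivAt U (evP x A * W x + evP x B * U x) x)
    {x : ℂ} (hdet : (W x).det ≠ 0) :
    HasDerivAt (fun z => ((W z).det)⁻¹ • (U z * (W z).adjugate))
      (evP x A + evP x B * (((W x).det)⁻¹ • (U x * (W x).adjugate)) +
        (((W x).det)⁻¹ • (U x * (W x).adjugate)) * evP x C *
          (((W x).det)⁻¹ • (U x * (W x).adjugate))) x := by
  classical
  set Yh : ℂ → Mat N := fun z => ((W z).det)⁻¹ • (U z * (W z).adjugate) with hYh
  have hWe : ∀ z : ℂ, ∀ i j, DifferentiableAt ℂ (fun z => W z i j) z := fun z i j =>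
    (HasDerivAt.matrix_entry (hW z) i j).differentiableAt
  have hUe : ∀ z : ℂ, ∀ i j, DifferentiableAt ℂ (fun z => U z i j) z := fun z i j =>
    (HasDerivAt.matrix_entry (hU z) i j).differentiableAt
  have hdet_cont : ContinuousAt (fun z => (W z).det) x :=
    (det_differentiableAt (hWe x)).continuousAt
  have hev : ∀ᶠ z in nhds x, (W z).det ≠ 0 := hdet_cont.eventually_ne hdet
  have hYhe : ∀ i j, DifferentiableAt ℂ (fun z => Yh z i j) x := by
    intro i j
    have hrw : (fun z => Yh z i j)
        = fun z => ((W z).det)⁻¹ * ((U z * (W z).adjugate) i j) := by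
      funext z; rw [hYh]; simp [Matrix.smul_apply, smul_eq_mul]
    rw [hrw]
    exact ((det_differentiableAt (hWe x)).inv hdet).mul
      (entry_mul_differentiableAt (hUe x) (adjugate_differentiableAt (hWe x)) i j)
  set D₀ : Mat N := Matrix.of fun i j => deriv (fun z => Yh z i j) x with hD₀def
  have hYhD : HasDerivAt Yh D₀ x := hasDerivAt_matrix fun i j => (hYhe i j).hasDerivAt
  have hprod : HasDerivAt (fun z => Yh z * W z) (D₀ * W x + Yh x * -(evP x C * U x)) x :=
    hYhD.mul (hW x)
  have hYhW : ∀ z, (W z).det ≠ 0 → Yh z * W z = U z := by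
    intro z hz
    calc Yh z * W z
        = ((W z).det)⁻¹ • (U z * ((W z).adjugate * W z)) := by
          rw [hYh]; rw [Matrix.smul_mul, Matrix.mul_assoc]
      _ = ((W z).det)⁻¹ • ((W z).det • U z) := by
          rw [Matrix.adjugate_mul, Matrix.mul_smul, mul_one]
      _ = U z := by rw [smul_smul, inv_mul_cancel₀ hz, one_smul]
  have heq : (fun z => Yh z * W z) =ᶠ[nhds x] U := by
    filter_upwards [hev] with z hz using hYhW z hz
  have hU2 : HasDerivAt (fun z => Yh z * W z) (evP x A * W x + evP x B * U x) x :=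
    (hU x).congr_of_eventuallyEq heq
  have huniq : D₀ * W x + Yh x * -(evP x C * U x) = evP x A * W x + evP x B * U x :=
    hprod.unique hU2
  have hUx : U x = Yh x * W x := (hYhW x hdet).symm
  have hWinv : W x * (W x)⁻¹ = 1 := Matrix.mul_nonsing_inv (W x) (isUnit_iff_ne_zero.mpr hdet)
  have hD : D₀ * W x = (evP x A + evP x B * Yh x + Yh x * evP x C * Yh x) * W x := by
    have h1 : D₀ * W x = evP x A * W x + evP x B * U x + Yh x * (evP x C * U x) := by
      calc D₀ * W x
          = D₀ * W x + Yh x * -(evP x C * U x) + Yh x * (evP x C * U x) := by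
            rw [mul_neg]; abel
        _ = evP x A * W x + evP x B * U x + Yh x * (evP x C * U x) := by rw [huniq]
    rw [h1, hUx]
    noncomm_ring
  have hfin : D₀ = evP x A + evP x B * Yh x + Yh x * evP x C * Yh x := by
    have h2 := congrArg (fun M => M * (W x)⁻¹) hD
    simpa [Matrix.mul_assoc, hWinv, Matrix.mul_one] using h2
  rw [hfin] at hYhD
  exact hYhD


variable {N : ℕ}

/-- Local uniqueness for the matrix Riccati equation. -/
lemma riccati_local_unique (A B C : PMat N) {Y₁ Y₂ : ℂ → Mat N} {x₁ : ℂ} {ε : ℝ} (hε : 0 < ε)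
    (h₁ : ∀ x ∈ Metric.ball x₁ ε,
      HasDerivAt Y₁ (evP x A + evP x B * Y₁ x + Y₁ x * evP x C * Y₁ x) x)
    (h₂ : ∀ x ∈ Metric.ball x₁ ε,
      HasDerivAt Y₂ (evP x A + evP x B * Y₂ x + Y₂ x * evP x C * Y₂ x) x)
    (h0 : Y₁ x₁ = Y₂ x₁) :
    ∃ δ > 0, Set.EqOn Y₁ Y₂ (Metric.ball x₁ δ) := by
  classical
  set ε₂ : ℝ := ε / 2 with hε₂
  have hε₂pos : 0 < ε₂ := by positivity
  have hsub : Metric.closedBall x₁ ε₂ ⊆ Metric.ball x₁ ε := by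
    apply Metric.closedBall_subset_ball; rw [hε₂]; linarith
  have hcb : IsCompact (Metric.closedBall x₁ ε₂) := isCompact_closedBall _ _
  have hmem₁ : x₁ ∈ Metric.closedBall x₁ ε₂ := Metric.mem_closedBall_self hε₂pos.le
  have hY₁c : ContinuousOn Y₁ (Metric.closedBall x₁ ε₂) := fun x hx =>
    (h₁ x (hsub hx)).continuousAt.continuousWithinAt
  have hY₂c : ContinuousOn Y₂ (Metric.closedBall x₁ ε₂) := fun x hx =>
    (h₂ x (hsub hx)).continuousAt.continuousWithinAt
  obtain ⟨ρ₁, hρ₁⟩ := hcb.exists_bound_of_continuousOn hY₁c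
  obtain ⟨ρ₂, hρ₂⟩ := hcb.exists_bound_of_continuousOn hY₂c
  obtain ⟨cB, hcB⟩ := hcb.exists_bound_of_continuousOn (differentiable_evP B).continuous.continuousOn
  obtain ⟨cC, hcC⟩ := hcb.exists_bound_of_continuousOn (differentiable_evP C).continuous.continuousOn
  set ρ : ℝ := max ρ₁ ρ₂ with hρ
  have hρ0 : 0 ≤ ρ := le_trans (le_trans (norm_nonneg _) (hρ₁ x₁ hmem₁)) (le_max_left _ _)
  set κ : ℝ := max cB cC with hκ
  have hκ0 : 0 ≤ κ := le_trans (le_trans (norm_nonneg _) (hcB x₁ hmem₁)) (le_max_left _ _)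
  set δ : ℝ := ε₂ / 2 with hδ
  have hδpos : 0 < δ := by positivity
  refine ⟨δ, hδpos, ?_⟩
  intro y hy
  rcases eq_or_ne y x₁ with rfl | hne
  · exact h0
  set w : ℂ := y - x₁ with hw
  have hwnorm : ‖w‖ < δ := by rw [hw, ← dist_eq_norm]; exact Metric.mem_ball.mp hy
  have hw0 : (0:ℝ) ≤ ‖w‖ := norm_nonneg _
  have hseg : ∀ t : ℝ, t ∈ Icc (-1:ℝ) 2 → (x₁ + (t:ℂ) * w) ∈ Metric.closedBall x₁ ε₂ := by
    intro t ht
    rw [Metric.mem_closedBall, dist_eq_norm, add_sub_cancel_left, norm_mul, Complex.norm_real,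
      Real.norm_eq_abs]
    have habs : |t| ≤ 2 := abs_le.mpr ⟨by linarith [ht.1], ht.2⟩
    calc |t| * ‖w‖ ≤ 2 * ‖w‖ := mul_le_mul_of_nonneg_right habs hw0
      _ ≤ 2 * δ := by linarith
      _ = ε₂ := by rw [hδ]; ring
  set v : ℝ → Mat N → Mat N := fun t M =>
    w • (evP (x₁ + (t:ℂ) * w) A + evP (x₁ + (t:ℂ) * w) B * M + M * evP (x₁ + (t:ℂ) * w) C * M)
    with hv
  set sfun : ℝ → Set (Mat N) := fun t =>
    if t ∈ Icc (-1:ℝ) 2 then Metric.closedBall 0 ρ else ∅ with hsfun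
  set Kr : ℝ := δ * (κ + 2 * κ * ρ) with hKr
  have hKr0 : 0 ≤ Kr := by positivity
  have hLip : ∀ t, LipschitzOnWith Kr.toNNReal (v t) (sfun t) := by
    intro t
    by_cases ht : t ∈ Icc (-1:ℝ) 2
    · rw [hsfun]; simp only [ht, if_true]
      apply LipschitzOnWith.of_dist_le_mul
      intro M hM M' hM'
      have hMn : ‖M‖ ≤ ρ := by rwa [← dist_zero_right]
      have hM'n : ‖M'‖ ≤ ρ := by rwa [← dist_zero_right]
      have hBn : ‖evP (x₁ + (t:ℂ) * w) B‖ ≤ κ := (hcB _ (hseg t ht)).trans (le_max_left _ _)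
      have hCn : ‖evP (x₁ + (t:ℂ) * w) C‖ ≤ κ := (hcC _ (hseg t ht)).trans (le_max_right _ _)
      set Ae := evP (x₁ + (t:ℂ) * w) A
      set Be := evP (x₁ + (t:ℂ) * w) B
      set Ce := evP (x₁ + (t:ℂ) * w) C
      have hXdiff : (Ae + Be * M + M * Ce * M) - (Ae + Be * M' + M' * Ce * M')
          = Be * (M - M') + (M * Ce * (M - M') + (M - M') * Ce * M') := by
        noncomm_ring
      have hvdiff : v t M - v t M'
          = w • (Be * (M - M') + (M * Ce * (M - M') + (M - M') * Ce * M')) := by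
        rw [hv]; dsimp only
        rw [← smul_sub, hXdiff]
      rw [dist_eq_norm, dist_eq_norm, hvdiff, norm_smul]
      have hZ : ‖Be * (M - M') + (M * Ce * (M - M') + (M - M') * Ce * M')‖
          ≤ (κ + 2 * κ * ρ) * ‖M - M'‖ := by
        calc ‖Be * (M - M') + (M * Ce * (M - M') + (M - M') * Ce * M')‖
            ≤ ‖Be * (M - M')‖ + (‖M * Ce * (M - M')‖ + ‖(M - M') * Ce * M'‖) :=
              (norm_add_le _ _).trans (by gcongr; exact norm_add_le _ _)
          _ ≤ ‖Be‖ * ‖M - M'‖ + (‖M‖ * ‖Ce‖ * ‖M - M'‖ + ‖M - M'‖ * ‖Ce‖ * ‖M'‖) := by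
              gcongr
              · exact norm_mul_le _ _
              · exact (norm_mul_le _ _).trans (by gcongr; exact norm_mul_le _ _)
              · exact (norm_mul_le _ _).trans (by gcongr; exact norm_mul_le _ _)
          _ ≤ κ * ‖M - M'‖ + (ρ * κ * ‖M - M'‖ + ‖M - M'‖ * κ * ρ) := by
              gcongr <;> first | exact hBn | exact hCn | exact hMn | exact hM'n
          _ = (κ + 2 * κ * ρ) * ‖M - M'‖ := by ring
      calc ‖w‖ * ‖Be * (M - M') + (M * Ce * (M - M') + (M - M') * Ce * M')‖
          ≤ ‖w‖ * ((κ + 2 * κ * ρ) * ‖M - M'‖) := by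
            exact mul_le_mul_of_nonneg_left hZ hw0
        _ ≤ δ * ((κ + 2 * κ * ρ) * ‖M - M'‖) := by
            apply mul_le_mul_of_nonneg_right hwnorm.le (by positivity)
        _ = Kr.toNNReal * ‖M - M'‖ := by
            rw [Real.coe_toNNReal _ hKr0, hKr]; ring
    · rw [hsfun]; simp only [ht, if_false]
      intro M hM; exact absurd hM (Set.notMem_empty _)
  -- the two solutions along the segment
  set f : ℝ → Mat N := fun t => Y₁ (x₁ + (t:ℂ) * w) with hf
  set g : ℝ → Mat N := fun t => Y₂ (x₁ + (t:ℂ) * w) with hg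
  have hsegc : Continuous fun t : ℝ => x₁ + (t:ℂ) * w :=
    continuous_const.add (Complex.continuous_ofReal.mul continuous_const)
  have hfc : ContinuousOn f (Icc (-1:ℝ) 2) :=
    hY₁c.comp hsegc.continuousOn fun t ht => hseg t ht
  have hgc : ContinuousOn g (Icc (-1:ℝ) 2) :=
    hY₂c.comp hsegc.continuousOn fun t ht => hseg t ht
  have hf' : ∀ t ∈ Ioo (-1:ℝ) 2, HasDerivAt f (v t (f t)) t := by
    intro t ht
    exact hasDerivAt_comp_seg (h₁ _ (hsub (hseg t (Ioo_subset_Icc_self ht))))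
  have hg' : ∀ t ∈ Ioo (-1:ℝ) 2, HasDerivAt g (v t (g t)) t := by
    intro t ht
    exact hasDerivAt_comp_seg (h₂ _ (hsub (hseg t (Ioo_subset_Icc_self ht))))
  have hfs : ∀ t ∈ Ioo (-1:ℝ) 2, f t ∈ sfun t := by
    intro t ht
    rw [hsfun]; simp only [Ioo_subset_Icc_self ht, if_true]
    rw [Metric.mem_closedBall, dist_zero_right]
    exact le_trans (hρ₁ _ (hseg t (Ioo_subset_Icc_self ht))) (le_max_left _ _)
  have hgs : ∀ t ∈ Ioo (-1:ℝ) 2, g t ∈ sfun t := by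
    intro t ht
    rw [hsfun]; simp only [Ioo_subset_Icc_self ht, if_true]
    rw [Metric.mem_closedBall, dist_zero_right]
    exact le_trans (hρ₂ _ (hseg t (Ioo_subset_Icc_self ht))) (le_max_right _ _)
  have h00 : f 0 = g 0 := by
    rw [hf, hg]; dsimp only
    norm_num [h0]
  have ht0 : (0:ℝ) ∈ Ioo (-1:ℝ) 2 := by constructor <;> norm_num
  have hEq := ODE_solution_unique_of_mem_Icc (fun t _ => hLip t) ht0 hfc hf' hfs hgc hg' hgs h00
  have ht1 : (1:ℝ) ∈ Icc (-1:ℝ) 2 := by constructor <;> norm_num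
  have h1 := hEq ht1
  have : x₁ + ((1:ℝ):ℂ) * w = y := by rw [hw]; push_cast; ring
  rw [hf, hg] at h1; dsimp only at h1
  rwa [this] at h1


variable {N : ℕ}

theorem main (A B C : PMat N) (hC : C.det ≠ 0) (Y : ℂ → Mat N)
    (hYdiff : ∀ i j, DifferentiableOn ℂ (fun x => Y x i j) {x | C.det.eval x ≠ 0})
    (hYeq : ∀ x : ℂ, C.det.eval x ≠ 0 →
      (Matrix.of fun i j => deriv (fun t => Y t i j) x) =
        (A.map fun p => p.eval x) + (B.map fun p => p.eval x) * Y x +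
          Y x * (C.map fun p => p.eval x) * Y x) :
    ∃ Ym : ℂ → Mat N,
      (∀ i j, MeromorphicOn (fun x => Ym x i j) Set.univ) ∧
        ∀ x : ℂ, C.det.eval x ≠ 0 → Ym x = Y x := by
  classical
  set Ω : Set ℂ := {x | C.det.eval x ≠ 0} with hΩ
  have hΩopen : IsOpen Ω := by
    have : Ω = (fun x => (C.det).eval x) ⁻¹' ({0}ᶜ) := rfl
    rw [this]
    exact (isOpen_compl_singleton).preimage (Polynomial.continuous _)
  -- a base point
  have hfin : {x : ℂ | (C.det).IsRoot x}.Finite := Polynomial.finite_setOf_isRoot hC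
  obtain ⟨x₁, hx₁⟩ := hfin.infinite_compl.nonempty
  have hx₁Ω : x₁ ∈ Ω := by
    simpa [hΩ, Polynomial.IsRoot] using hx₁
  -- the entire linear system
  obtain ⟨W, U, hW, hU, hW1, hU0⟩ := exists_entire_pair A B C x₁ (Y x₁)
  have hWe : ∀ z : ℂ, ∀ i j, DifferentiableAt ℂ (fun z => W z i j) z := fun z i j =>
    (HasDerivAt.matrix_entry (hW z) i j).differentiableAt
  have hUe : ∀ z : ℂ, ∀ i j, DifferentiableAt ℂ (fun z => U z i j) z := fun z i j =>
    (HasDerivAt.matrix_entry (hU z) i j).differentiableAt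
  set detf : ℂ → ℂ := fun z => (W z).det with hdetf
  have hdetdiff : Differentiable ℂ detf := fun z => det_differentiableAt (hWe z)
  have hdet1 : detf x₁ = 1 := by rw [hdetf]; simp [hW1]
  set Dset : Set ℂ := {z | detf z ≠ 0} with hDset
  have hDopen : IsOpen Dset := by
    have : Dset = detf ⁻¹' ({0}ᶜ) := rfl
    rw [this]
    exact (isOpen_compl_singleton).preimage hdetdiff.continuous
  have hx₁D : x₁ ∈ Dset := by simp [hDset, hdet1]
  set Yh : ℂ → Mat N := fun z => (detf z)⁻¹ • (U z * (W z).adjugate) with hYh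
  have hYhD : ∀ z, detf z ≠ 0 →
      HasDerivAt Yh (evP z A + evP z B * Yh z + Yh z * evP z C * Yh z) z := fun z hz =>
    Yhat_hasDerivAt A B C hW hU hz
  -- Y as a matrix-valued solution
  have hYmat : ∀ x ∈ Ω, HasDerivAt Y (evP x A + evP x B * Y x + Y x * evP x C * Y x) x := by
    intro x hx
    have hent : ∀ i j, HasDerivAt (fun t => Y t i j)
        ((Matrix.of fun i j => deriv (fun t => Y t i j) x) i j) x := fun i j =>
      ((hYdiff i j).differentiableAt (hΩopen.mem_nhds hx)).hasDerivAt
    have hYD := hasDerivAt_matrix hent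
    rw [hYeq x hx] at hYD
    have hconv : ∀ P : PMat N, P.map (fun p => p.eval x) = evP x P := fun P => rfl
    rwa [hconv A, hconv B, hconv C] at hYD
  -- local agreement near x₁
  obtain ⟨ε, hεpos, hεsub⟩ := Metric.isOpen_iff.mp (hΩopen.inter hDopen) x₁ ⟨hx₁Ω, hx₁D⟩
  have hYh0 : Y x₁ = Yh x₁ := by
    rw [hYh]; dsimp only
    rw [hdetf]; dsimp only
    rw [hW1, hU0, Matrix.det_one, Matrix.adjugate_one, inv_one, one_smul, Matrix.mul_one]
  obtain ⟨δ, hδpos, hδeq⟩ := riccati_local_unique A B C hεpos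
    (fun x hx => hYmat x (hεsub hx).1)
    (fun x hx => hYhD x (hεsub hx).2)
    hYh0
  set δ' : ℝ := min δ ε with hδ'
  have hδ'pos : 0 < δ' := lt_min hδpos hεpos
  have hball' : Metric.ball x₁ δ' ⊆ Metric.ball x₁ ε := Metric.ball_subset_ball (min_le_right _ _)
  have hballδ : Metric.ball x₁ δ' ⊆ Metric.ball x₁ δ := Metric.ball_subset_ball (min_le_left _ _)
  -- identity theorem entrywise
  have hFzero : ∀ i j, Set.EqOn
      (fun x => detf x * Y x i j - (U x * (W x).adjugate) i j) (fun _ => (0:ℂ)) Ω := by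
    intro i j
    have hF_an : AnalyticOnNhd ℂ
        (fun x => detf x * Y x i j - (U x * (W x).adjugate) i j) Ω := by
      apply DifferentiableOn.analyticOnNhd _ hΩopen
      intro x hx
      apply DifferentiableWithinAt.sub
      · exact (((hdetdiff x).mul
          ((hYdiff i j).differentiableAt (hΩopen.mem_nhds hx))).differentiableWithinAt)
      · exact (entry_mul_differentiableAt (hUe x)
          (adjugate_differentiableAt (hWe x)) i j).differentiableWithinAt
    have hzero_an : AnalyticOnNhd ℂ (fun _ : ℂ => (0:ℂ)) Ω := fun _ _ => analyticAt_const
    have hΩeq : Ω = {x : ℂ | (C.det).IsRoot x}ᶜ := by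
      ext z; simp [hΩ, Polynomial.IsRoot]
    have hrank : 1 < Module.rank ℝ ℂ := by
      rw [Complex.rank_real_complex]; exact_mod_cast (by norm_num : (1:ℕ) < 2)
    have hpre : IsPreconnected Ω := by
      rw [hΩeq]
      exact (hfin.countable.isConnected_compl_of_one_lt_rank hrank).isPreconnected
    have heq : (fun x => detf x * Y x i j - (U x * (W x).adjugate) i j)
        =ᶠ[nhds x₁] (fun _ => (0:ℂ)) := by
      apply Filter.eventuallyEq_of_mem (Metric.ball_mem_nhds x₁ hδ'pos)
      intro z hz
      have hzD : detf z ≠ 0 := (hεsub (hball' hz)).2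
      have hzY : Y z = Yh z := hδeq (hballδ hz)
      have : Y z i j = (detf z)⁻¹ * ((U z * (W z).adjugate) i j) := by
        rw [hzY, hYh]; simp [Matrix.smul_apply, smul_eq_mul]
      simp only [this]
      field_simp
      ring
    exact hF_an.eqOn_of_preconnected_of_eventuallyEq hzero_an hpre hx₁Ω heq
  -- definition of the meromorphic extension
  set Ym : ℂ → Mat N := fun x =>
    if detf x = 0 then Y x else (detf x)⁻¹ • (U x * (W x).adjugate) with hYm
  refine ⟨Ym, ?_, ?_⟩
  · -- meromorphy
    intro i j z _
    have hnum_diff : Differentiable ℂ (fun x => (U x * (W x).adjugate) i j) := fun x =>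
      entry_mul_differentiableAt (hUe x) (adjugate_differentiableAt (hWe x)) i j
    have hnum_an : AnalyticAt ℂ (fun x => (U x * (W x).adjugate) i j) z :=
      hnum_diff.analyticAt z
    have hdet_an : AnalyticAt ℂ detf z := hdetdiff.analyticAt z
    have hg_mer : MeromorphicAt (fun x => (detf x)⁻¹ * ((U x * (W x).adjugate) i j)) z :=
      hdet_an.meromorphicAt.inv.mul hnum_an.meromorphicAt
    have hne : ∀ᶠ w in nhdsWithin z {z}ᶜ, detf w ≠ 0 := by
      rcases hdet_an.eventually_eq_zero_or_eventually_ne_zero with h | h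
      · exfalso
        have hdet_anOn : AnalyticOnNhd ℂ detf Set.univ := fun w _ => hdetdiff.analyticAt w
        have := hdet_anOn.eqOn_zero_of_preconnected_of_eventuallyEq_zero
          isPreconnected_univ (Set.mem_univ z) h
        have h1 := this (Set.mem_univ x₁)
        rw [hdet1] at h1
        exact one_ne_zero h1
      · exact h
    apply hg_mer.congr
    filter_upwards [hne] with w hw
    rw [hYm]
    simp only [hw, if_false]
    simp [Matrix.smul_apply, smul_eq_mul]
  · -- agreement with Y on Ω
    intro x hx
    rw [hYm]
    by_cases hd : detf x = 0
    · simp only [hd, if_true]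
    · simp only [hd, if_false]
      ext i j
      have hF := hFzero i j hx
      have hnum : (U x * (W x).adjugate) i j = detf x * Y x i j := by
        have : detf x * Y x i j - (U x * (W x).adjugate) i j = 0 := hF
        linear_combination -this
      rw [Matrix.smul_apply, smul_eq_mul, hnum]
      field_simp


end RicAux
end RicAuxSection

/-- **Theorem 6(2).** If every point of `Z = {c₁ = 0}` is a regular singular point of the
associated operator `P`, then every solution of the Riccati equation
`Y′ = A + BY + YCY` which is holomorphic (single-valued) on `ℂ∖Z` extends to a matrix of
functions meromorphic on all of `ℂ`. -/
theorem riccati_uniform_meromorphic {N : ℕ} (hN : 1 ≤ N)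
    (A B C : Matrix (Fin N) (Fin N) (Polynomial ℂ)) (hC : C.det ≠ 0)
    (hreg : RegularSingular (RicA2 C) (RicA1 B C) (RicA0 A C) C.det)
    (Y : ℂ → Matrix (Fin N) (Fin N) ℂ)
    (hYdiff : ∀ i j, DifferentiableOn ℂ (fun x => Y x i j) {x | C.det.eval x ≠ 0})
    (hYeq : ∀ x : ℂ, C.det.eval x ≠ 0 →
      matDeriv Y x =
        (A.map fun p => p.eval x) + (B.map fun p => p.eval x) * Y x +
          Y x * (C.map fun p => p.eval x) * Y x) :
    ∃ Ym : ℂ → Matrix (Fin N) (Fin N) ℂ,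
      (∀ i j, MeromorphicOn (fun x => Ym x i j) Set.univ) ∧
        ∀ x : ℂ, C.det.eval x ≠ 0 → Ym x = Y x := by
  have h := RicAux.main A B C hC Y hYdiff (fun x hx => hYeq x hx)
  exact h
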